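/- Let p be a prime number and F a field of characteristic p, and let f(X) ∈ F[X] be irreducible. If f(X^p) is not irreducible in F[X], then there exist an irreducible polynomial g(X) ∈ F[X] and a unit u ∈ F^× such that f(X^p) = u·g(X)^p. -/

import Mathlib

open Polynomial

/-- **Statement 11.** Let `p` be a prime, `F` a field of characteristic `p`, and
`f ∈ F[X]` irreducible.  If `f(X^p)` is not irreducible in `F[X]`, then
`f(X^p) = u·g(X)^p` for some irreducible `g ∈ F[X]` and a unit `u ∈ F`. -/
theorem comp_pow_char_eq_pow_of_not_irreducible (p : ℕ) (hp : p.Prime)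
    (F : Type*) [Field F] (hchar : ringChar F = p) (f : Polynomial F)
    (hf : Irreducible f) (hnot : ¬ Irreducible (f.comp (X ^ p))) :
    ∃ g : Polynomial F, Irreducible g ∧ ∃ u : F, u ≠ 0 ∧
      f.comp (X ^ p) = C u * g ^ p := by
  classical
  haveI : CharP F p := hchar ▸ ringChar.charP F
  haveI : Fact p.Prime := ⟨hp⟩
  set q : F[X] := expand F p f with hqdef
  have hq_comp : f.comp (X ^ p) = q := rfl
  have hf0 : f ≠ 0 := hf.ne_zero
  have hq0 : q ≠ 0 := fun h => hf0 ((expand_eq_zero hp.pos).mp h)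
  rw [hq_comp] at hnot
  have hq' : derivative q = 0 := by
    rw [hqdef, derivative_expand]
    simp [CharP.cast_eq_zero F p]
  open UniqueFactorizationMonoid in
  have key : ∀ g ∈ normalizedFactors q, p ∣ (normalizedFactors q).count g := by
    intro g hg
    have hgi : Irreducible g := irreducible_of_normalized_factor g hg
    have hfin : FiniteMultiplicity g q :=
      FiniteMultiplicity.of_not_isUnit hgi.not_isUnit hq0
    obtain ⟨h, hqe, hgh⟩ := hfin.exists_eq_pow_mul_and_not_dvd
    set e := multiplicity g q with he
    have hcount : (normalizedFactors q).count g = e := by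
      have h1 := emultiplicity_eq_count_normalizedFactors hgi hq0
      rw [normalize_normalized_factor g hg, hfin.emultiplicity_eq_multiplicity] at h1
      exact_mod_cast h1.symm
    rw [hcount]
    by_contra hpe
    have he1 : e ≠ 0 := by
      intro h0
      rw [h0, pow_zero, one_mul] at hqe
      exact hgh (hqe ▸ dvd_of_mem_normalizedFactors hg)
    obtain ⟨d, hde⟩ : ∃ d, e = d + 1 :=
      ⟨e - 1, (Nat.succ_pred_eq_of_pos (Nat.pos_of_ne_zero he1)).symm⟩
    rw [hde] at hqe
    have hd : C ((d + 1 : ℕ) : F) * g ^ d * derivative g * h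
        + g ^ (d + 1) * derivative h = 0 := by
      have h1 : derivative (g ^ (d + 1) * h) = 0 := by rw [← hqe]; exact hq'
      rwa [derivative_mul, derivative_pow, Nat.add_sub_cancel] at h1
    have hz : C ((d + 1 : ℕ) : F) * derivative g * h + g * derivative h = 0 := by
      have h2 : g ^ d * (C ((d + 1 : ℕ) : F) * derivative g * h + g * derivative h)
          = C ((d + 1 : ℕ) : F) * g ^ d * derivative g * h + g ^ (d + 1) * derivative h := by
        ring
      rw [hd] at h2
      exact (mul_eq_zero.mp h2).resolve_left (pow_ne_zero _ hgi.ne_zero)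
    -- g divides C e * g' * h
    have hdvd : g ∣ C ((d + 1 : ℕ) : F) * derivative g * h := by
      refine ⟨-derivative h, ?_⟩
      have := eq_neg_of_add_eq_zero_left hz
      rw [this]; ring
    have hgd : derivative g = 0 := by
      have hCe : IsUnit (C ((d + 1 : ℕ) : F)) := by
        refine isUnit_C.mpr (isUnit_iff_ne_zero.mpr ?_)
        rw [Ne, CharP.cast_eq_zero_iff F p (d + 1), ← hde]
        exact hpe
      have hdvd2 : g ∣ derivative g * h := by
        rw [mul_assoc] at hdvd
        exact hCe.dvd_mul_left.mp hdvd
      rcases (hgi.prime.dvd_mul).mp hdvd2 with h3 | h3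
      · by_contra hgd0
        have := Polynomial.degree_le_of_dvd h3 hgd0
        exact absurd this (not_le_of_gt (Polynomial.degree_derivative_lt hgi.ne_zero))
      · exact absurd h3 hgh
    have hhd : derivative h = 0 := by
      have : g * derivative h = 0 := by
        rw [hgd] at hz; simpa using hz
      exact (mul_eq_zero.mp this).resolve_left hgi.ne_zero
    set G := contract p g with hGdef
    set H := contract p h with hHdef
    have hG : expand F p G = g := expand_contract p hgd hp.ne_zero
    have hH : expand F p H = h := expand_contract p hhd hp.ne_zero
    have hfact : f = G * (G ^ d * H) := by
      apply expand_injective hp.pos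
      rw [map_mul, map_mul, map_pow, hG, hH, ← hqdef, hqe]
      ring
    rcases hf.isUnit_or_isUnit hfact with hu | hu
    · exact hgi.not_isUnit (hG ▸ hu.map (expand F p))
    · have hu2 : IsUnit (g ^ d * h) := by
        have := hu.map (expand F p)
        rwa [map_mul, map_pow, hG, hH] at this
      have hassoc : Associated g q := ⟨hu2.unit, by
        rw [IsUnit.unit_spec, hqe]; ring⟩
      exact hnot (hq_comp ▸ hassoc.irreducible hgi)
  obtain ⟨S, hS⟩ := Multiset.exists_smul_of_dvd_count _ key
  set G := S.prod with hGdef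
  have hassoc := UniqueFactorizationMonoid.prod_normalizedFactors hq0
  obtain ⟨u, hu⟩ := hassoc
  obtain ⟨c, hcu, hcC⟩ := Polynomial.isUnit_iff.mp u.isUnit
  have hc0 : c ≠ 0 := hcu.ne_zero
  have hq_eq : q = C c * G ^ p := by
    rw [← hu, hS, Multiset.prod_nsmul, hcC, mul_comm, hGdef]
  have hGmonic : G.Monic := by
    refine Multiset.prod_induction _ _ (fun a b ha hb => ha.mul hb) monic_one ?_
    intro g hg
    have hg' : g ∈ UniqueFactorizationMonoid.normalizedFactors q := by
      rw [hS]
      rw [Multiset.mem_nsmul]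
      exact ⟨hp.ne_zero, hg⟩
    have h1 := UniqueFactorizationMonoid.normalize_normalized_factor g hg'
    have h2 : g ≠ 0 := (UniqueFactorizationMonoid.irreducible_of_normalized_factor g hg').ne_zero
    have := Polynomial.monic_normalize h2
    rwa [h1] at this
  have hGmapfr : expand F p (G.map (frobenius F p)) = G ^ p := by
    rw [← map_expand, map_frobenius_expand]
  have hfeq : f = C c * G.map (frobenius F p) := by
    apply expand_injective hp.pos
    rw [map_mul, expand_C, hGmapfr, ← hqdef, hq_eq]
  have hCc : IsUnit (C c : F[X]) := isUnit_C.mpr hcu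
  have hmapirr : Irreducible (G.map (frobenius F p)) := by
    have hassoc2 : Associated f (G.map (frobenius F p)) :=
      ⟨hCc.unit⁻¹, by
        rw [hfeq]
        rw [mul_right_comm, IsUnit.mul_val_inv]
        ring⟩
    exact hassoc2.irreducible hf
  have hGirr : Irreducible G :=
    hGmonic.irreducible_of_irreducible_map (frobenius F p) G hmapirr
  exact ⟨G, hGirr, c, hc0, by rw [hq_comp, hq_eq]⟩
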